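/- Let H be a Hermitian matrix on a finite-dimensional complex Hilbert space with spectral decomposition H = Σ_j E_j Π_j, let σ > 0, and let G_σ(x) = Σ_j (√2 σ/√π)^{1/2} e^{−σ²(E_j−x)²} Π_j be the Gaussian energy filter. Then for every complex matrix ρ, ∫_ℝ G_σ(x) ρ G_σ(x) dx = Σ_{i,j} e^{−σ²(E_i−E_j)²/2} Π_i ρ Π_j; consequently the Gaussian stabilization channel admits the filter representation 𝒢_σ ρ = ∫_ℝ G_σ(x) ρ G_σ(x) dx. -/

import Mathlib

open MeasureTheory Matrix
open scoped ComplexOrder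

noncomputable section

attribute [local instance] Matrix.frobeniusNormedAddCommGroup Matrix.frobeniusNormedSpace

/-- The Gaussian energy filter `G_σ(x) = Σ_j (√2 σ/√π)^{1/2} e^{−σ²(E_j−x)²} Π_j`. -/
def gaussianFilter {n m : ℕ} (E : Fin m → ℝ) (P : Fin m → Matrix (Fin n) (Fin n) ℂ)
    (σ x : ℝ) : Matrix (Fin n) (Fin n) ℂ :=
  ∑ j, (Real.sqrt (Real.sqrt 2 * σ / Real.sqrt Real.pi) *
      Real.exp (-σ ^ 2 * (E j - x) ^ 2)) • P j

namespace GaussianFilterAux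

variable {n m : ℕ}

lemma real_smul_eq (r : ℝ) (M : Matrix (Fin n) (Fin n) ℂ) : r • M = (r : ℂ) • M := by
  ext i j
  simp [Complex.real_smul]

lemma expand (P : Fin m → Matrix (Fin n) (Fin n) ℂ) (a b : Fin m → ℂ)
    (ρ : Matrix (Fin n) (Fin n) ℂ) :
    (∑ i, a i • P i) * ρ * (∑ j, b j • P j)
      = ∑ i, ∑ j, (a i * b j) • (P i * ρ * P j) := by
  rw [Finset.sum_mul, Finset.sum_mul]
  refine Finset.sum_congr rfl fun i _ => ?_
  rw [Finset.mul_sum]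
  refine Finset.sum_congr rfl fun j _ => ?_
  rw [smul_mul_assoc, smul_mul_smul_comm]

lemma pow_sum_smul (P : Fin m → Matrix (Fin n) (Fin n) ℂ)
    (hOrth : ∀ j k, P j * P k = if j = k then P j else 0)
    (hSum : ∑ j, P j = 1) (c : Fin m → ℂ) (k : ℕ) :
    (∑ j, c j • P j) ^ k = ∑ j, (c j ^ k) • P j := by
  induction k with
  | zero => simp [hSum]
  | succ k ih =>
    rw [pow_succ, ih, Finset.sum_mul]
    refine Finset.sum_congr rfl fun j _ => ?_
    rw [Finset.mul_sum]
    simp only [smul_mul_smul_comm, hOrth, smul_ite, smul_zero]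
    rw [Finset.sum_ite_eq]
    simp [pow_succ]

lemma exp_sum_smul (P : Fin m → Matrix (Fin n) (Fin n) ℂ)
    (hOrth : ∀ j k, P j * P k = if j = k then P j else 0)
    (hSum : ∑ j, P j = 1) (E : Fin m → ℝ) (z : ℂ) :
    NormedSpace.exp (z • ∑ j, (E j : ℂ) • P j) = ∑ j, Complex.exp (z * E j) • P j := by
  rw [NormedSpace.exp_eq_tsum ℂ]
  have hterm : ∀ k : ℕ, ((k.factorial : ℂ))⁻¹ • (z • ∑ j, (E j : ℂ) • P j) ^ k
      = ∑ j, ((z * E j) ^ k / (k.factorial : ℂ)) • P j := by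
    intro k
    rw [smul_pow, pow_sum_smul P hOrth hSum, Finset.smul_sum, Finset.smul_sum]
    refine Finset.sum_congr rfl fun j _ => ?_
    rw [smul_smul, smul_smul]
    rw [mul_pow]
    ring
  simp only [hterm]
  rw [Summable.tsum_finsetSum fun j _ => ((NormedSpace.expSeries_div_summable (z * E j)).smul_const (P j))]
  refine Finset.sum_congr rfl fun j _ => ?_
  rw [Summable.tsum_smul_const (NormedSpace.expSeries_div_summable _)]
  congr 1
  rw [Complex.exp_eq_exp_ℂ, NormedSpace.exp_eq_tsum_div]

lemma gauss_prod_eq (σ a b : ℝ) (x : ℝ) :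
    Real.exp (-σ ^ 2 * (a - x) ^ 2) * Real.exp (-σ ^ 2 * (b - x) ^ 2)
      = Real.exp (-(2 * σ ^ 2) * (x - (a + b) / 2) ^ 2) * Real.exp (-σ ^ 2 * (a - b) ^ 2 / 2) := by
  rw [← Real.exp_add, ← Real.exp_add]
  congr 1
  ring

lemma gauss_prod_integrable (σ a b : ℝ) (hσ : 0 < σ) :
    Integrable (fun x : ℝ => Real.exp (-σ ^ 2 * (a - x) ^ 2) * Real.exp (-σ ^ 2 * (b - x) ^ 2)) := by
  have h2 : (0 : ℝ) < 2 * σ ^ 2 := by positivity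
  simp only [gauss_prod_eq σ a b]
  exact ((integrable_exp_neg_mul_sq h2).comp_sub_right ((a + b) / 2)).mul_const _

lemma gauss_prod_integral (σ a b : ℝ) (hσ : 0 < σ) :
    ∫ x : ℝ, Real.exp (-σ ^ 2 * (a - x) ^ 2) * Real.exp (-σ ^ 2 * (b - x) ^ 2)
      = Real.sqrt Real.pi / (Real.sqrt 2 * σ) * Real.exp (-σ ^ 2 * (a - b) ^ 2 / 2) := by
  have h2 : (0 : ℝ) < 2 * σ ^ 2 := by positivity
  simp only [gauss_prod_eq σ a b]
  rw [integral_mul_const, integral_sub_right_eq_self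
    (fun x : ℝ => Real.exp (-(2 * σ ^ 2) * x ^ 2)) ((a + b) / 2), integral_gaussian]
  congr 1
  rw [Real.sqrt_div Real.pi_pos.le, Real.sqrt_mul (by norm_num : (0:ℝ) ≤ 2), Real.sqrt_sq hσ.le]

lemma gauss_fourier (σ d : ℝ) (hσ : 0 < σ) :
    ∫ t : ℝ, ((Real.sqrt (2 * Real.pi * σ ^ 2))⁻¹ : ℂ) *
        Complex.exp (((-(2 * σ ^ 2)⁻¹ : ℝ) : ℂ) * t ^ 2 + (-(Complex.I * (d : ℂ))) * t + 0)
      = (Real.exp (-σ ^ 2 * d ^ 2 / 2) : ℂ) := by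
  have hσ2 : (0 : ℝ) < 2 * σ ^ 2 := by positivity
  have hX : (0 : ℝ) < 2 * Real.pi * σ ^ 2 := by positivity
  have hb : (((-(2 * σ ^ 2)⁻¹ : ℝ) : ℂ)).re < 0 := by
    rw [Complex.ofReal_re]
    have : (0 : ℝ) < (2 * σ ^ 2)⁻¹ := by positivity
    linarith
  rw [MeasureTheory.integral_const_mul, integral_cexp_quadratic hb]
  have h1 : ((Real.pi : ℂ) / -((-(2 * σ ^ 2)⁻¹ : ℝ) : ℂ)) = ((2 * Real.pi * σ ^ 2 : ℝ) : ℂ) := by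
    have hσ' : (σ : ℂ) ≠ 0 := by exact_mod_cast hσ.ne'
    push_cast
    field_simp
  have h2 : ((2 * Real.pi * σ ^ 2 : ℝ) : ℂ) ^ (1 / 2 : ℂ) = ((Real.sqrt (2 * Real.pi * σ ^ 2) : ℝ) : ℂ) := by
    rw [show (1 / 2 : ℂ) = ((1 / 2 : ℝ) : ℂ) by norm_num, ← Complex.ofReal_cpow hX.le,
      ← Real.sqrt_eq_rpow]
  have h3 : (0 : ℂ) - (-(Complex.I * (d : ℂ))) ^ 2 / (4 * ((-(2 * σ ^ 2)⁻¹ : ℝ) : ℂ))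
      = ((-σ ^ 2 * d ^ 2 / 2 : ℝ) : ℂ) := by
    have hI : (-(Complex.I * (d : ℂ))) ^ 2 = -((d : ℂ) ^ 2) := by
      rw [neg_pow, mul_pow, Complex.I_sq]
      ring
    have hσ' : (σ : ℂ) ≠ 0 := by exact_mod_cast hσ.ne'
    rw [hI]
    push_cast
    field_simp
    ring
  have hne : ((Real.sqrt (2 * Real.pi * σ ^ 2) : ℝ) : ℂ) ≠ 0 := by
    exact_mod_cast Real.sqrt_ne_zero'.mpr hX
  rw [h1, h2, h3, ← Complex.ofReal_exp, ← Complex.ofReal_mul, Complex.ofReal_mul,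
    ← mul_assoc, inv_mul_cancel₀ hne, one_mul]

end GaussianFilterAux

theorem gaussian_filter_representation
    {n m : ℕ} (H : Matrix (Fin n) (Fin n) ℂ)
    (E : Fin m → ℝ) (P : Fin m → Matrix (Fin n) (Fin n) ℂ)
    (hE : Function.Injective E)
    (hHerm : ∀ j, (P j)ᴴ = P j)
    (hOrth : ∀ j k, P j * P k = if j = k then P j else 0)
    (hSum : ∑ j, P j = 1)
    (hH : H = ∑ j, (E j : ℂ) • P j)
    (σ : ℝ) (hσ : 0 < σ) (ρ : Matrix (Fin n) (Fin n) ℂ) :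
    (∫ x : ℝ, gaussianFilter E P σ x * ρ * gaussianFilter E P σ x) =
        ∑ i, ∑ j, Real.exp (-σ ^ 2 * (E i - E j) ^ 2 / 2) • (P i * ρ * P j) ∧
      (∫ t : ℝ, ((Real.sqrt (2 * Real.pi * σ ^ 2))⁻¹ * Real.exp (-t ^ 2 / (2 * σ ^ 2))) •
          (NormedSpace.exp ((-(Complex.I * (t : ℂ))) • H) * ρ *
            NormedSpace.exp ((Complex.I * (t : ℂ)) • H))) =
        ∫ x : ℝ, gaussianFilter E P σ x * ρ * gaussianFilter E P σ x := by
  classical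
  letI : ContinuousENorm (Matrix (Fin n) (Fin n) ℂ) := SeminormedAddGroup.toContinuousENorm
  have hπ : Real.sqrt Real.pi ≠ 0 := Real.sqrt_ne_zero'.mpr Real.pi_pos
  have h2' : Real.sqrt 2 ≠ 0 := Real.sqrt_ne_zero'.mpr (by norm_num)
  set A := Real.sqrt 2 * σ / Real.sqrt Real.pi with hA
  have hA0 : 0 ≤ A := by
    have := Real.sqrt_nonneg 2
    have := Real.sqrt_nonneg Real.pi
    positivity
  have hconst : A * (Real.sqrt Real.pi / (Real.sqrt 2 * σ)) = 1 := by
    rw [hA]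
    field_simp
  have key1 : (∫ x : ℝ, gaussianFilter E P σ x * ρ * gaussianFilter E P σ x)
      = ∑ i, ∑ j, Real.exp (-σ ^ 2 * (E i - E j) ^ 2 / 2) • (P i * ρ * P j) := by
    have hpt : ∀ x : ℝ, gaussianFilter E P σ x * ρ * gaussianFilter E P σ x
        = ∑ i, ∑ j, ((A * (Real.exp (-σ ^ 2 * (E i - x) ^ 2) *
            Real.exp (-σ ^ 2 * (E j - x) ^ 2)) : ℝ) : ℂ) • (P i * ρ * P j) := by
      intro x
      have hfil : gaussianFilter E P σ x
          = ∑ j, ((Real.sqrt A * Real.exp (-σ ^ 2 * (E j - x) ^ 2) : ℝ) : ℂ) • P j := by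
        unfold gaussianFilter
        exact Finset.sum_congr rfl fun j _ => by rw [GaussianFilterAux.real_smul_eq]
      rw [hfil, GaussianFilterAux.expand]
      refine Finset.sum_congr rfl fun i _ => Finset.sum_congr rfl fun j _ => ?_
      congr 1
      rw [← Complex.ofReal_mul]
      congr 1
      rw [show Real.sqrt A * Real.exp (-σ ^ 2 * (E i - x) ^ 2) *
            (Real.sqrt A * Real.exp (-σ ^ 2 * (E j - x) ^ 2))
          = Real.sqrt A * Real.sqrt A *
            (Real.exp (-σ ^ 2 * (E i - x) ^ 2) * Real.exp (-σ ^ 2 * (E j - x) ^ 2)) by ring,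
        Real.mul_self_sqrt hA0]
    have hInt : ∀ i j : Fin m, Integrable (fun x : ℝ =>
        ((A * (Real.exp (-σ ^ 2 * (E i - x) ^ 2) *
          Real.exp (-σ ^ 2 * (E j - x) ^ 2)) : ℝ) : ℂ) • (P i * ρ * P j)) := fun i j =>
      (((GaussianFilterAux.gauss_prod_integrable σ (E i) (E j) hσ).const_mul A).ofReal).smul_const _
    simp only [hpt]
    rw [integral_finset_sum _ (fun i _ => integrable_finset_sum _ (fun j _ => hInt i j))]
    refine Finset.sum_congr rfl fun i _ => ?_
    rw [integral_finset_sum _ (fun j _ => hInt i j)]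
    refine Finset.sum_congr rfl fun j _ => ?_
    rw [integral_smul_const, GaussianFilterAux.real_smul_eq]
    congr 1
    have hreal : ∫ x : ℝ, A * (Real.exp (-σ ^ 2 * (E i - x) ^ 2) *
        Real.exp (-σ ^ 2 * (E j - x) ^ 2)) = Real.exp (-σ ^ 2 * (E i - E j) ^ 2 / 2) := by
      rw [MeasureTheory.integral_const_mul, GaussianFilterAux.gauss_prod_integral σ (E i) (E j) hσ,
        ← mul_assoc, hconst, one_mul]
    exact integral_ofReal.trans (congrArg _ hreal)
  refine ⟨key1, ?_⟩
  rw [key1]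
  have hb : (((-(2 * σ ^ 2)⁻¹ : ℝ) : ℂ)).re < 0 := by
    rw [Complex.ofReal_re]
    have : (0 : ℝ) < (2 * σ ^ 2)⁻¹ := by positivity
    linarith
  have hexp : ∀ z : ℂ, NormedSpace.exp (z • H) = ∑ j, Complex.exp (z * E j) • P j := by
    intro z
    rw [hH]
    exact GaussianFilterAux.exp_sum_smul P hOrth hSum E z
  have hpt2 : ∀ t : ℝ,
      ((Real.sqrt (2 * Real.pi * σ ^ 2))⁻¹ * Real.exp (-t ^ 2 / (2 * σ ^ 2))) •
        (NormedSpace.exp ((-(Complex.I * (t : ℂ))) • H) * ρ *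
          NormedSpace.exp ((Complex.I * (t : ℂ)) • H))
      = ∑ i, ∑ j, (((Real.sqrt (2 * Real.pi * σ ^ 2))⁻¹ : ℂ) *
          Complex.exp (((-(2 * σ ^ 2)⁻¹ : ℝ) : ℂ) * t ^ 2 +
            (-(Complex.I * ((E i - E j : ℝ) : ℂ))) * t + 0)) • (P i * ρ * P j) := by
    intro t
    rw [hexp, hexp, GaussianFilterAux.expand, GaussianFilterAux.real_smul_eq, Finset.smul_sum]
    refine Finset.sum_congr rfl fun i _ => ?_
    rw [Finset.smul_sum]
    refine Finset.sum_congr rfl fun j _ => ?_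
    rw [smul_smul]
    congr 1
    rw [Complex.ofReal_mul, Complex.ofReal_exp, mul_assoc, ← Complex.exp_add, ← Complex.exp_add]
    congr 1
    · push_cast
      ring
    · congr 1
      push_cast
      ring
  have hInt2 : ∀ i j : Fin m, Integrable (fun t : ℝ =>
      (((Real.sqrt (2 * Real.pi * σ ^ 2))⁻¹ : ℂ) *
        Complex.exp (((-(2 * σ ^ 2)⁻¹ : ℝ) : ℂ) * t ^ 2 +
          (-(Complex.I * ((E i - E j : ℝ) : ℂ))) * t + 0)) • (P i * ρ * P j)) := fun i j =>
    ((integrable_cexp_quadratic' hb (-(Complex.I * ((E i - E j : ℝ) : ℂ))) 0).const_mul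
      _).smul_const _
  simp only [hpt2]
  rw [integral_finset_sum _ (fun i _ => integrable_finset_sum _ (fun j _ => hInt2 i j))]
  refine Finset.sum_congr rfl fun i _ => ?_
  rw [integral_finset_sum _ (fun j _ => hInt2 i j)]
  refine Finset.sum_congr rfl fun j _ => ?_
  rw [integral_smul_const, GaussianFilterAux.gauss_fourier σ (E i - E j) hσ,
    GaussianFilterAux.real_smul_eq]
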